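/- Let Σ ⊆ ℝ^(n+k) and let C be the set of limits lim √tᵢ xᵢ with tᵢ → 0⁺ and xᵢ ∈ Σ. Suppose there is C₀ > 0 such that for all t₁ > t₂ > 0, the Hausdorff distance satisfies dist_H(√t₁ Σ, √t₂ Σ) ≤ C₀ √(t₁ − t₂). Then for every x ∈ Σ and every t > 0 there exists y ∈ C with |√t x − y| ≤ C₀ √(3t). -/
import Mathlib


open Filter
open scoped Pointwise

/-- Dependent-choice chain lemma: iteratively pick nearby points in successive sets. -/
lemma exists_chain_seq {α : Type*} [PseudoMetricSpace α] (T : ℕ → Set α) (b : ℕ → ℝ)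
    (h : ∀ i, ∀ p ∈ T i, ∃ q ∈ T (i + 1), dist p q ≤ b i) (p₀ : α) (hp₀ : p₀ ∈ T 0) :
    ∃ f : ℕ → α, f 0 = p₀ ∧ (∀ i, f i ∈ T i) ∧ ∀ i, dist (f i) (f (i + 1)) ≤ b i := by
  choose! F hF1 hF2 using h
  let f : ℕ → α := fun i => Nat.rec p₀ (fun i q => F i q) i
  have hmem : ∀ i, f i ∈ T i := by
    intro i
    induction i with
    | zero => exact hp₀
    | succ i ih => exact hF1 i (f i) ih
  exact ⟨f, rfl, hmem, fun i => hF2 i (f i) (hmem i)⟩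

lemma sqrt_num_ineq : Real.sqrt 15 / 3 + 1 / 5 ≤ Real.sqrt 3 := by
  have h3 : Real.sqrt 3 ≤ 28 / 15 := Real.sqrt_le_iff.mpr ⟨by norm_num, by norm_num⟩
  have h3s : Real.sqrt 3 ^ 2 = 3 := Real.sq_sqrt (by norm_num)
  have h15s : Real.sqrt 15 ^ 2 = 15 := Real.sq_sqrt (by norm_num)
  have h3n : 0 ≤ Real.sqrt 3 := Real.sqrt_nonneg 3
  have h15n : 0 ≤ Real.sqrt 15 := Real.sqrt_nonneg 15
  have h31 : 1 ≤ Real.sqrt 3 := by nlinarith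
  nlinarith [sq_nonneg (5 * Real.sqrt 15 - (15 * Real.sqrt 3 - 3))]

/-- If `dist_H(√t₁ Σ, √t₂ Σ) ≤ C₀ √(t₁ - t₂)` for all `t₁ > t₂ > 0`, then every point
`√t x` with `x ∈ Σ` is within distance `C₀ √(3t)` of the limit cone `C` of `√t Σ` as
`t → 0⁺`. -/
theorem point_close_to_cone (n k : ℕ) (S : Set (EuclideanSpace ℝ (Fin (n + k))))
    (C₀ : ℝ) (hC₀ : 0 < C₀)
    (hH : ∀ t₁ t₂ : ℝ, 0 < t₂ → t₂ < t₁ →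
      EMetric.hausdorffEdist (Real.sqrt t₁ • S) (Real.sqrt t₂ • S)
        ≤ ENNReal.ofReal (C₀ * Real.sqrt (t₁ - t₂))) :
    let C : Set (EuclideanSpace ℝ (Fin (n + k))) :=
      {y | ∃ (t : ℕ → ℝ) (x : ℕ → EuclideanSpace ℝ (Fin (n + k))),
        (∀ i, 0 < t i) ∧ Tendsto t atTop (nhds 0) ∧ (∀ i, x i ∈ S) ∧
        Tendsto (fun i => Real.sqrt (t i) • x i) atTop (nhds y)}
    ∀ x ∈ S, ∀ t : ℝ, 0 < t →
      ∃ y ∈ C, dist (Real.sqrt t • x) y ≤ C₀ * Real.sqrt (3 * t) := by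
  intro C x hx t ht
  set τ : ℕ → ℝ := fun i => t / 16 ^ i with hτ
  have hτpos : ∀ i, 0 < τ i := fun i => by positivity
  have hτlt : ∀ i, τ (i + 1) < τ i := by
    intro i
    have h1 : (0:ℝ) < 16 ^ i := by positivity
    have h2 : (16:ℝ) ^ i < 16 ^ (i + 1) := by rw [pow_succ]; nlinarith
    exact div_lt_div_of_pos_left ht h1 h2
  set b : ℕ → ℝ := fun i =>
    C₀ * Real.sqrt (τ i - τ (i + 1)) + C₀ * Real.sqrt t / 5 * (1 / 2) ^ (i + 1) with hb
  set T : ℕ → Set (EuclideanSpace ℝ (Fin (n + k))) := fun i => Real.sqrt (τ i) • S with hT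
  -- the chain step
  have step : ∀ i, ∀ p ∈ T i, ∃ q ∈ T (i + 1), dist p q ≤ b i := by
    intro i p hp
    have h1 := hH (τ i) (τ (i + 1)) (hτpos (i + 1)) (hτlt i)
    have hlt : EMetric.infEdist p (T (i + 1)) < ENNReal.ofReal (b i) := by
      refine lt_of_le_of_lt ((EMetric.infEdist_le_hausdorffEdist_of_mem hp).trans h1) ?_
      have hpos : C₀ * Real.sqrt (τ i - τ (i + 1)) < b i := by
        have : (0:ℝ) < C₀ * Real.sqrt t / 5 * (1 / 2) ^ (i + 1) := by
          have : (0:ℝ) < Real.sqrt t := Real.sqrt_pos.mpr ht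
          positivity
        simp only [hb]; linarith
      have hbnn : 0 ≤ C₀ * Real.sqrt (τ i - τ (i + 1)) := by positivity
      exact (ENNReal.ofReal_lt_ofReal_iff (lt_of_le_of_lt hbnn hpos)).mpr hpos
    obtain ⟨q, hq, hd⟩ := EMetric.infEdist_lt_iff.mp hlt
    exact ⟨q, hq, (edist_lt_ofReal.mp hd).le⟩
  have hp₀ : Real.sqrt t • x ∈ T 0 := by
    refine Set.mem_smul_set.mpr ⟨x, hx, ?_⟩
    simp [hτ]
  obtain ⟨f, hf0, hfmem, hfd⟩ := exists_chain_seq T b step _ hp₀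
  -- geometric form of b
  set A : ℝ := C₀ * Real.sqrt (15 * t) / 4 with hA
  set B : ℝ := C₀ * Real.sqrt t / 10 with hB
  have hτd : ∀ i, τ i - τ (i + 1) = (15 * t) * ((1 / 4:ℝ) ^ (i + 1)) ^ 2 := by
    intro i
    have h16 : ((1 / 4:ℝ) ^ (i + 1)) ^ 2 = 1 / 16 ^ (i + 1) := by
      rw [div_pow, one_pow, div_pow, one_pow, ← pow_mul,
        show (16:ℝ) ^ (i + 1) = 4 ^ ((i + 1) * 2) from by
          rw [pow_mul']; norm_num]
    rw [h16]
    simp only [hτ]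
    have h1 : (16:ℝ) ^ i ≠ 0 := by positivity
    have h2 : (16:ℝ) ^ (i + 1) ≠ 0 := by positivity
    field_simp
    ring
  have hbeq : b = fun i => A * (1 / 4:ℝ) ^ i + B * (1 / 2:ℝ) ^ i := by
    funext i
    simp only [hb, hA, hB]
    rw [hτd i, Real.sqrt_mul (by positivity), Real.sqrt_sq (by positivity)]
    ring
  have hsum4 : Summable (fun i => A * (1 / 4:ℝ) ^ i) :=
    (summable_geometric_of_lt_one (by norm_num) (by norm_num)).mul_left A
  have hsum2 : Summable (fun i => B * (1 / 2:ℝ) ^ i) :=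
    (summable_geometric_of_lt_one (by norm_num) (by norm_num)).mul_left B
  have hbsum : Summable b := by rw [hbeq]; exact hsum4.add hsum2
  have hbnn : ∀ i, 0 ≤ b i := by
    intro i
    have : (0:ℝ) ≤ Real.sqrt t := Real.sqrt_nonneg t
    simp only [hb]
    positivity
  -- convergence of the chain
  have hcauchy : CauchySeq f := by
    apply cauchySeq_of_summable_dist
    exact Summable.of_nonneg_of_le (fun i => dist_nonneg) (fun i => hfd i) hbsum
  obtain ⟨y, hy⟩ := cauchySeq_tendsto_of_complete hcauchy
  -- extract the points of S
  have hmem' : ∀ i, ∃ z ∈ S, Real.sqrt (τ i) • z = f i :=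
    fun i => Set.mem_smul_set.mp (hfmem i)
  choose xs hxsS hxse using hmem'
  refine ⟨y, ⟨τ, xs, hτpos, ?_, hxsS, ?_⟩, ?_⟩
  · -- τ → 0
    have h1 : Tendsto (fun i : ℕ => t * (1 / 16:ℝ) ^ i) atTop (nhds 0) := by
      have := (tendsto_pow_atTop_nhds_zero_of_lt_one
        (by norm_num : (0:ℝ) ≤ 1 / 16) (by norm_num : (1 / 16:ℝ) < 1)).const_mul t
      simpa using this
    have : (fun i => τ i) = fun i : ℕ => t * (1 / 16:ℝ) ^ i := by
      funext i
      simp only [hτ]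
      rw [div_pow, one_pow, mul_one_div]
    rw [hτ]; rw [show (fun i => t / 16 ^ i) = fun i : ℕ => t * (1 / 16:ℝ) ^ i from this]
    exact h1
  · -- √(τ i) • xs i → y
    have : (fun i => Real.sqrt (τ i) • xs i) = f := funext hxse
    rw [this]; exact hy
  · -- the distance estimate
    have hdist : dist (f 0) y ≤ ∑' i, b i :=
      dist_le_tsum_of_dist_le_of_tendsto₀ b hfd hbsum hy
    have htsum : ∑' i, b i = C₀ * Real.sqrt (15 * t) / 3 + C₀ * Real.sqrt t / 5 := by
      rw [hbeq, Summable.tsum_add hsum4 hsum2, tsum_mul_left, tsum_mul_left,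
        tsum_geometric_of_lt_one (by norm_num) (by norm_num),
        tsum_geometric_of_lt_one (by norm_num) (by norm_num)]
      simp only [hA, hB]
      norm_num
      ring
    have hfinal : C₀ * Real.sqrt (15 * t) / 3 + C₀ * Real.sqrt t / 5
        ≤ C₀ * Real.sqrt (3 * t) := by
      rw [Real.sqrt_mul (by norm_num : (0:ℝ) ≤ 15), Real.sqrt_mul (by norm_num : (0:ℝ) ≤ 3)]
      have hkey := sqrt_num_ineq
      have hnn : (0:ℝ) ≤ C₀ * Real.sqrt t := by positivity
      nlinarith [mul_le_mul_of_nonneg_right hkey hnn]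
    rw [← hf0]
    calc dist (f 0) y ≤ ∑' i, b i := hdist
      _ = C₀ * Real.sqrt (15 * t) / 3 + C₀ * Real.sqrt t / 5 := htsum
      _ ≤ C₀ * Real.sqrt (3 * t) := hfinal
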